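/- Optimality of the weighting function in the class of linear estimating functions (the Morton bound used to choose λ*): Let 𝓖 ⊆ 𝓕 be a sub-σ-algebra, Ũ a square-integrable random variable with E[Ũ | 𝓖] = 0 μ-a.e., and D an integrable random variable. Let G be a version of E[D | 𝓖] and V a version of E[Ũ² | 𝓖], and suppose V > 0 μ-a.e. and G²/V is integrable. Then for every bounded 𝓖-measurable random variable λ, (E[λ·D])² ≤ E[λ²·Ũ²] · E[G²/V]; moreover, if λ = G/V is bounded, then it attains equality: (E[(G/V)·D])² = E[(G/V)²·Ũ²] · E[G²/V]. -/

import Mathlib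

open MeasureTheory

/-- Cauchy–Schwarz for integrals of real L² functions. -/
lemma morton_cs_integral {Ω : Type*} {mΩ : MeasurableSpace Ω} {μ : Measure Ω}
    {f g : Ω → ℝ} (hf : MemLp f 2 μ) (hg : MemLp g 2 μ) :
    (∫ ω, f ω * g ω ∂μ) ^ 2 ≤ (∫ ω, f ω ^ 2 ∂μ) * ∫ ω, g ω ^ 2 ∂μ := by
  have hpq : Real.HolderConjugate 2 2 := ⟨by norm_num, by norm_num, by norm_num⟩
  have h2 : (ENNReal.ofReal (2 : ℝ)) = 2 := by norm_num
  have hf' : MemLp f (ENNReal.ofReal (2 : ℝ)) μ := h2 ▸ hf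
  have hg' : MemLp g (ENNReal.ofReal (2 : ℝ)) μ := h2 ▸ hg
  have key := integral_mul_norm_le_Lp_mul_Lq hpq hf' hg'
  have hA : ∫ ω, ‖f ω‖ ^ (2 : ℝ) ∂μ = ∫ ω, f ω ^ 2 ∂μ := by
    refine integral_congr_ae (Filter.Eventually.of_forall fun ω => ?_)
    show ‖f ω‖ ^ (2 : ℝ) = f ω ^ 2
    rw [show ((2:ℝ) = ((2:ℕ):ℝ)) by norm_num, Real.rpow_natCast, Real.norm_eq_abs, sq_abs]
  have hB : ∫ ω, ‖g ω‖ ^ (2 : ℝ) ∂μ = ∫ ω, g ω ^ 2 ∂μ := by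
    refine integral_congr_ae (Filter.Eventually.of_forall fun ω => ?_)
    show ‖g ω‖ ^ (2 : ℝ) = g ω ^ 2
    rw [show ((2:ℝ) = ((2:ℕ):ℝ)) by norm_num, Real.rpow_natCast, Real.norm_eq_abs, sq_abs]
  set A := ∫ ω, f ω ^ 2 ∂μ with hAdef
  set B := ∫ ω, g ω ^ 2 ∂μ with hBdef
  have hA0 : 0 ≤ A := integral_nonneg fun ω => sq_nonneg _
  have hB0 : 0 ≤ B := integral_nonneg fun ω => sq_nonneg _
  rw [hA, hB] at key
  have hsq : A ^ ((1:ℝ)/2) * B ^ ((1:ℝ)/2) = Real.sqrt A * Real.sqrt B := by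
    rw [Real.sqrt_eq_rpow, Real.sqrt_eq_rpow]
  rw [hsq] at key
  have h1 : |∫ ω, f ω * g ω ∂μ| ≤ ∫ ω, ‖f ω‖ * ‖g ω‖ ∂μ := by
    calc |∫ ω, f ω * g ω ∂μ| ≤ ∫ ω, ‖f ω * g ω‖ ∂μ := by
          simpa [Real.norm_eq_abs] using norm_integral_le_integral_norm (fun ω => f ω * g ω) (μ := μ)
      _ = ∫ ω, ‖f ω‖ * ‖g ω‖ ∂μ := by simp [norm_mul]
  have h2' : |∫ ω, f ω * g ω ∂μ| ≤ Real.sqrt A * Real.sqrt B := h1.trans key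
  have h3 : (∫ ω, f ω * g ω ∂μ) ^ 2 ≤ (Real.sqrt A * Real.sqrt B) ^ 2 := by
    rw [← sq_abs]
    exact pow_le_pow_left₀ (abs_nonneg _) h2' 2
  calc (∫ ω, f ω * g ω ∂μ) ^ 2 ≤ (Real.sqrt A * Real.sqrt B) ^ 2 := h3
    _ = A * B := by rw [mul_pow, Real.sq_sqrt hA0, Real.sq_sqrt hB0]

/-- Pull-out property at the level of integrals: for bounded `𝓖`-measurable `lam`
and integrable `f` with `X` a version of `E[f | 𝓖]`, `∫ lam·f = ∫ lam·X`. -/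
lemma morton_integral_mul_condexp {Ω : Type*} {mΩ : MeasurableSpace Ω} (μ : Measure Ω)
    [IsProbabilityMeasure μ] (𝓖 : MeasurableSpace Ω) (h𝓖 : 𝓖 ≤ mΩ)
    {lam f X : Ω → ℝ} (hlam : Measurable[𝓖] lam) {M : ℝ} (hb : ∀ ω, |lam ω| ≤ M)
    (hf : Integrable f μ) (hX : X =ᵐ[μ] μ[f | 𝓖]) :
    ∫ ω, lam ω * f ω ∂μ = ∫ ω, lam ω * X ω ∂μ := by
  haveI : SigmaFinite (μ.trim h𝓖) := inferInstance
  have h1 : μ[lam * f | 𝓖] =ᵐ[μ] lam * μ[f | 𝓖] :=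
    condExp_stronglyMeasurable_mul_of_bound h𝓖 hlam.stronglyMeasurable hf M
      (Filter.Eventually.of_forall fun ω => by simpa [Real.norm_eq_abs] using hb ω)
  have h2 : ∫ ω, lam ω * f ω ∂μ = ∫ ω, (μ[lam * f | 𝓖]) ω ∂μ :=
    (integral_condExp h𝓖 (f := lam * f)).symm
  rw [h2]
  refine integral_congr_ae ?_
  filter_upwards [h1, hX] with ω hω hXω
  simp only [Pi.mul_apply] at hω
  rw [hω, hXω]

/-- Optimality of the weighting function in the class of linear estimating
functions (the Morton bound used to choose `λ*`): for every bounded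
`𝓖`-measurable `λ`, `(E[λ·D])² ≤ E[λ²·Ũ²]·E[G²/V]`, with equality attained at
`λ = G/V` whenever `G/V` is bounded. -/
theorem morton_optimal_weighting
    {Ω : Type*} {mΩ : MeasurableSpace Ω} (μ : Measure Ω) [IsProbabilityMeasure μ]
    (𝓖 : MeasurableSpace Ω) (h𝓖 : 𝓖 ≤ mΩ)
    (U : Ω → ℝ) (hU2 : MemLp U 2 μ) (hUcond : μ[U | 𝓖] =ᵐ[μ] 0)
    (D : Ω → ℝ) (hD : Integrable D μ)
    (G : Ω → ℝ) (hGmeas : Measurable[𝓖] G) (hGver : G =ᵐ[μ] μ[D | 𝓖])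
    (V : Ω → ℝ) (hVmeas : Measurable[𝓖] V) (hVver : V =ᵐ[μ] μ[fun ω => U ω ^ 2 | 𝓖])
    (hVpos : ∀ᵐ ω ∂μ, 0 < V ω)
    (hGV : Integrable (fun ω => G ω ^ 2 / V ω) μ) :
    (∀ lam : Ω → ℝ, Measurable[𝓖] lam → (∃ M, ∀ ω, |lam ω| ≤ M) →
      (∫ ω, lam ω * D ω ∂μ) ^ 2
        ≤ (∫ ω, lam ω ^ 2 * U ω ^ 2 ∂μ) * ∫ ω, G ω ^ 2 / V ω ∂μ) ∧
    ((∃ M, ∀ ω, |G ω / V ω| ≤ M) →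
      (∫ ω, (G ω / V ω) * D ω ∂μ) ^ 2
        = (∫ ω, (G ω / V ω) ^ 2 * U ω ^ 2 ∂μ) * ∫ ω, G ω ^ 2 / V ω ∂μ) := by
  have hU2int : Integrable (fun ω => U ω ^ 2) μ := hU2.integrable_sq
  have hVint : Integrable V μ := (integrable_condExp).congr hVver.symm
  have hVmeas' : Measurable[mΩ] V := fun s hs => h𝓖 _ (hVmeas hs)
  have hGmeas' : Measurable[mΩ] G := fun s hs => h𝓖 _ (hGmeas hs)
  -- the two key integral identities, for a bounded 𝓖-measurable lam
  have keyD : ∀ (lam : Ω → ℝ), Measurable[𝓖] lam → (∃ M, ∀ ω, |lam ω| ≤ M) →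
      ∫ ω, lam ω * D ω ∂μ = ∫ ω, lam ω * G ω ∂μ := by
    rintro lam hlm ⟨M, hM⟩
    exact morton_integral_mul_condexp μ 𝓖 h𝓖 hlm hM hD hGver
  have keyU : ∀ (lam : Ω → ℝ), Measurable[𝓖] lam → (∃ M, ∀ ω, |lam ω| ≤ M) →
      ∫ ω, lam ω ^ 2 * U ω ^ 2 ∂μ = ∫ ω, lam ω ^ 2 * V ω ∂μ := by
    rintro lam hlm ⟨M, hM⟩
    refine morton_integral_mul_condexp μ 𝓖 h𝓖 (hlm.pow_const 2) (M := M ^ 2)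
      (fun ω => ?_) hU2int hVver
    rw [abs_pow]
    exact pow_le_pow_left₀ (abs_nonneg _) (hM ω) 2
  -- main inequality for a bounded 𝓖-measurable lam
  have main : ∀ (lam : Ω → ℝ), Measurable[𝓖] lam → (∃ M, ∀ ω, |lam ω| ≤ M) →
      (∫ ω, lam ω * D ω ∂μ) ^ 2
        ≤ (∫ ω, lam ω ^ 2 * U ω ^ 2 ∂μ) * ∫ ω, G ω ^ 2 / V ω ∂μ := by
    rintro lam hlm hMex
    obtain ⟨M, hM⟩ := hMex
    have hlm' : Measurable[mΩ] lam := fun s hs => h𝓖 _ (hlm hs)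
    set f1 : Ω → ℝ := fun ω => lam ω * Real.sqrt (V ω) with hf1def
    set g1 : Ω → ℝ := fun ω => G ω / Real.sqrt (V ω) with hg1def
    have hf1m : Measurable[mΩ] f1 := hlm'.mul hVmeas'.sqrt
    have hg1m : Measurable[mΩ] g1 := hGmeas'.div hVmeas'.sqrt
    -- f1² = lam² * V  a.e.
    have hf1sq : (fun ω => f1 ω ^ 2) =ᵐ[μ] fun ω => lam ω ^ 2 * V ω := by
      filter_upwards [hVpos] with ω hω
      simp only [hf1def, mul_pow, Real.sq_sqrt hω.le]
    -- g1² = G²/V  a.e.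
    have hg1sq : (fun ω => g1 ω ^ 2) =ᵐ[μ] fun ω => G ω ^ 2 / V ω := by
      filter_upwards [hVpos] with ω hω
      simp only [hg1def, div_pow, Real.sq_sqrt hω.le]
    have hbd : ∀ᵐ ω ∂μ, ‖lam ω ^ 2‖ ≤ M ^ 2 := by
      refine Filter.Eventually.of_forall fun ω => ?_
      rw [Real.norm_eq_abs, abs_pow]
      exact pow_le_pow_left₀ (abs_nonneg _) (hM ω) 2
    have hlmsq : Measurable[mΩ] (fun ω => lam ω ^ 2) := hlm'.pow_const 2
    have hsm : AEStronglyMeasurable[mΩ] (fun ω => lam ω ^ 2) μ :=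
      hlmsq.aestronglyMeasurable
    have hlamsqV : Integrable (fun ω => lam ω ^ 2 * V ω) μ :=
      hVint.bdd_mul hsm hbd
    have hf1L2 : MemLp f1 2 μ := by
      refine (memLp_two_iff_integrable_sq ?_).mpr (hlamsqV.congr hf1sq.symm)
      exact hf1m.aestronglyMeasurable
    have hg1L2 : MemLp g1 2 μ := by
      refine (memLp_two_iff_integrable_sq ?_).mpr (hGV.congr hg1sq.symm)
      exact hg1m.aestronglyMeasurable
    have hcs := morton_cs_integral hf1L2 hg1L2
    have hfg : (fun ω => f1 ω * g1 ω) =ᵐ[μ] fun ω => lam ω * G ω := by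
      filter_upwards [hVpos] with ω hω
      have hs : Real.sqrt (V ω) ≠ 0 := by positivity
      show lam ω * Real.sqrt (V ω) * (G ω / Real.sqrt (V ω)) = lam ω * G ω
      field_simp
    rw [integral_congr_ae hfg, integral_congr_ae hf1sq, integral_congr_ae hg1sq] at hcs
    calc (∫ ω, lam ω * D ω ∂μ) ^ 2 = (∫ ω, lam ω * G ω ∂μ) ^ 2 := by
          rw [keyD lam hlm ⟨M, hM⟩]
      _ ≤ (∫ ω, lam ω ^ 2 * V ω ∂μ) * ∫ ω, G ω ^ 2 / V ω ∂μ := hcs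
      _ = (∫ ω, lam ω ^ 2 * U ω ^ 2 ∂μ) * ∫ ω, G ω ^ 2 / V ω ∂μ := by
          rw [keyU lam hlm ⟨M, hM⟩]
  refine ⟨main, ?_⟩
  rintro ⟨M, hM⟩
  have hlm : Measurable[𝓖] fun ω => G ω / V ω := hGmeas.div hVmeas
  have e1 : ∫ ω, (G ω / V ω) * D ω ∂μ = ∫ ω, G ω ^ 2 / V ω ∂μ := by
    rw [keyD _ hlm ⟨M, hM⟩]
    refine integral_congr_ae (Filter.Eventually.of_forall fun ω => ?_)
    show G ω / V ω * G ω = G ω ^ 2 / V ω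
    rw [div_mul_eq_mul_div, ← pow_two]
  have e2 : ∫ ω, (G ω / V ω) ^ 2 * U ω ^ 2 ∂μ = ∫ ω, G ω ^ 2 / V ω ∂μ := by
    rw [keyU _ hlm ⟨M, hM⟩]
    refine integral_congr_ae ?_
    filter_upwards [hVpos] with ω hω
    show (G ω / V ω) ^ 2 * V ω = G ω ^ 2 / V ω
    field_simp
  rw [e1, e2, sq]
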